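/- Let f be a norm on ℝ^n and g a norm on ℝ^m, with f(x) ≥ ‖x‖₂ for all x and g(v) ≥ ‖v‖₂ for all v, and let λ₁, λ₂, α_x, α_v, C > 0. Define the cone 𝒞 = {(a,b) ∈ ℝ^n × ℝ^m : λ₁ f(a) + λ₂ g(b) ≤ C λ₁ α_x ‖a‖₂ + C λ₂ α_v ‖b‖₂} and 𝒞* = 𝒞 ∩ S^{n+m−1}. Then the Gaussian width satisfies ω(𝒞*) ≤ C′·[(α_x + (λ₂/λ₁)α_v)·ω(B_f) + (α_v + (λ₁/λ₂)α_x)·ω(B_g)] for some constant C′ depending only on C. -/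

import Mathlib

open MeasureTheory ProbabilityTheory

/-- The standard Gaussian measure on `ℝ^n` (i.i.d. `N(0,1)` coordinates). -/
noncomputable def stdGaussianPi (n : ℕ) : Measure (Fin n → ℝ) :=
  Measure.pi fun _ => gaussianReal 0 1

/-- Gaussian width `ω(T) = E sup_{x ∈ T} ⟨g, x⟩` for `g ~ N(0, I_n)`. -/
noncomputable def gaussWidth {n : ℕ} (T : Set (Fin n → ℝ)) : ℝ :=
  ∫ g, sSup ((fun x => ∑ i, g i * x i) '' T) ∂(stdGaussianPi n)

/-- Gaussian width for subsets of `ℝ^n × ℝ^m`, with a standard Gaussian vector on the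
product space and the Euclidean inner product `⟨(g₁,g₂),(a,b)⟩ = ⟨g₁,a⟩ + ⟨g₂,b⟩`. -/
noncomputable def gaussWidthProd {n m : ℕ} (T : Set ((Fin n → ℝ) × (Fin m → ℝ))) : ℝ :=
  ∫ g, sSup ((fun p => (∑ i, g.1 i * p.1 i) + ∑ j, g.2 j * p.2 j) '' T)
    ∂((stdGaussianPi n).prod (stdGaussianPi m))

instance (n : ℕ) : IsProbabilityMeasure (stdGaussianPi n) := by
  unfold stdGaussianPi; infer_instance

lemma integrable_abs_gaussian : Integrable (fun x : ℝ => |x|) (gaussianReal 0 1) := by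
  rw [gaussianReal_of_var_ne_zero 0 one_ne_zero]
  rw [integrable_withDensity_iff (measurable_gaussianPDF 0 1)
    (ae_of_all _ fun x => ENNReal.ofReal_lt_top)]
  have h1 : Integrable (fun x : ℝ => |x * Real.exp (-(2⁻¹) * x ^ 2)|) :=
    (integrable_mul_exp_neg_mul_sq (by norm_num : (0:ℝ) < 2⁻¹)).abs
  have h2 : Integrable (fun x : ℝ => (Real.sqrt (2 * Real.pi))⁻¹ * |x * Real.exp (-(2⁻¹) * x ^ 2)|) :=
    h1.const_mul _
  refine h2.congr (ae_of_all _ fun x => ?_)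
  simp only [abs_mul, abs_of_pos (Real.exp_pos _)]
  simp only [gaussianPDF, gaussianPDFReal]
  push_cast
  rw [mul_one]
  ring_nf
  rw [ENNReal.toReal_ofReal (by positivity)]
  ring

lemma map_eval_stdGaussianPi {n : ℕ} (i : Fin n) :
    (stdGaussianPi n).map (Function.eval i) = gaussianReal 0 1 := by
  ext s hs
  rw [Measure.map_apply (measurable_pi_apply i) hs, stdGaussianPi, ← Set.univ_pi_update_univ,
    Measure.pi_pi]
  rw [Finset.prod_eq_single i (fun j _ hj => by simp [Function.update_apply, hj]) (by simp)]
  simp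

lemma measurePreserving_eval_stdGaussianPi {n : ℕ} (i : Fin n) :
    MeasurePreserving (Function.eval i) (stdGaussianPi n) (gaussianReal 0 1) :=
  ⟨measurable_pi_apply i, map_eval_stdGaussianPi i⟩

lemma integrable_sum_abs (n : ℕ) :
    Integrable (fun h : Fin n → ℝ => ∑ i, |h i|) (stdGaussianPi n) := by
  refine integrable_finset_sum _ fun i _ => ?_
  have := (measurePreserving_eval_stdGaussianPi i).integrable_comp
    (g := fun x : ℝ => |x|) ?_ |>.mpr integrable_abs_gaussian
  · exact this
  · exact (continuous_abs.measurable).aestronglyMeasurable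

noncomputable def supF {n : ℕ} (f : (Fin n → ℝ) → ℝ) (h : Fin n → ℝ) : ℝ :=
  sSup ((fun x => ∑ i, h i * x i) '' {x | f x ≤ 1})

section supF
variable {n : ℕ} {f : (Fin n → ℝ) → ℝ}

lemma abs_coord_le_one (hge : ∀ x, Real.sqrt (∑ i, x i ^ 2) ≤ f x) {x : Fin n → ℝ}
    (hx : f x ≤ 1) (i : Fin n) : |x i| ≤ 1 := by
  have h1 : x i ^ 2 ≤ ∑ j, x j ^ 2 :=
    Finset.single_le_sum (fun j _ => sq_nonneg (x j)) (Finset.mem_univ i)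
  have h2 := Real.sqrt_le_sqrt h1
  rw [Real.sqrt_sq_eq_abs] at h2
  linarith [hge x]

lemma inner_le_sum_abs (h : Fin n → ℝ) {x : Fin n → ℝ} (hx : ∀ i, |x i| ≤ 1) :
    ∑ i, h i * x i ≤ ∑ i, |h i| := by
  refine Finset.sum_le_sum fun i _ => ?_
  calc h i * x i ≤ |h i * x i| := le_abs_self _
    _ = |h i| * |x i| := abs_mul _ _
    _ ≤ |h i| * 1 := by
        exact mul_le_mul_of_nonneg_left (hx i) (abs_nonneg _)
    _ = |h i| := mul_one _

lemma bddAbove_supF (hge : ∀ x, Real.sqrt (∑ i, x i ^ 2) ≤ f x) (h : Fin n → ℝ) :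
    BddAbove ((fun x => ∑ i, h i * x i) '' {x | f x ≤ 1}) := by
  refine ⟨∑ i, |h i|, fun v hv => ?_⟩
  obtain ⟨x, hx, rfl⟩ := hv
  exact inner_le_sum_abs h (abs_coord_le_one hge hx)

lemma f_zero (hhom : ∀ (c : ℝ) x, f (c • x) = |c| * f x) : f 0 = 0 := by
  have := hhom 0 0
  simpa using this

lemma supF_nonneg (hhom : ∀ (c : ℝ) x, f (c • x) = |c| * f x)
    (hge : ∀ x, Real.sqrt (∑ i, x i ^ 2) ≤ f x) (h : Fin n → ℝ) : 0 ≤ supF f h := by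
  have h0 : (0 : ℝ) ∈ (fun x => ∑ i, h i * x i) '' {x | f x ≤ 1} :=
    ⟨0, by simp [Set.mem_setOf_eq, f_zero hhom], by simp⟩
  exact le_csSup (bddAbove_supF hge h) h0

lemma supF_le_sum_abs (hge : ∀ x, Real.sqrt (∑ i, x i ^ 2) ≤ f x) (h : Fin n → ℝ) :
    supF f h ≤ ∑ i, |h i| := by
  refine Real.sSup_le (fun v hv => ?_) (Finset.sum_nonneg fun i _ => abs_nonneg _)
  obtain ⟨x, hx, rfl⟩ := hv
  exact inner_le_sum_abs h (abs_coord_le_one hge hx)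

lemma inner_le_f_mul_supF (hhom : ∀ (c : ℝ) x, f (c • x) = |c| * f x)
    (hf0 : ∀ x, f x = 0 → x = 0) (hge : ∀ x, Real.sqrt (∑ i, x i ^ 2) ≤ f x)
    (h a : Fin n → ℝ) : ∑ i, h i * a i ≤ f a * supF f h := by
  rcases eq_or_ne a 0 with rfl | ha
  · simp [f_zero hhom]
  · have hfa : 0 < f a := by
      rcases lt_or_eq_of_le ((Real.sqrt_nonneg _).trans (hge a)) with h' | h'
      · exact h'
      · exact absurd (hf0 a h'.symm) ha
    have hmem : (f a)⁻¹ • a ∈ {x | f x ≤ 1} := by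
      simp only [Set.mem_setOf_eq, hhom]
      rw [abs_of_pos (inv_pos.mpr hfa), inv_mul_cancel₀ hfa.ne']
    have hle : ∑ i, h i * ((f a)⁻¹ • a) i ≤ supF f h :=
      le_csSup (bddAbove_supF hge h) ⟨_, hmem, rfl⟩
    have : ∑ i, h i * ((f a)⁻¹ • a) i = (f a)⁻¹ * ∑ i, h i * a i := by
      rw [Finset.mul_sum]; congr 1; ext i; simp [Pi.smul_apply]; ring
    rw [this] at hle
    calc ∑ i, h i * a i = f a * ((f a)⁻¹ * ∑ i, h i * a i) := by
          field_simp
      _ ≤ f a * supF f h := mul_le_mul_of_nonneg_left hle hfa.le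

lemma supF_lipschitz (hhom : ∀ (c : ℝ) x, f (c • x) = |c| * f x)
    (hge : ∀ x, Real.sqrt (∑ i, x i ^ 2) ≤ f x) :
    LipschitzWith n (supF f) := by
  have key : ∀ h h' : Fin n → ℝ, supF f h ≤ supF f h' + ∑ i, |h i - h' i| := by
    intro h h'
    refine Real.sSup_le (fun v hv => ?_) ?_
    · obtain ⟨x, hx, rfl⟩ := hv
      have h1 : ∑ i, h' i * x i ≤ supF f h' := le_csSup (bddAbove_supF hge h') ⟨x, hx, rfl⟩
      have h2 : ∑ i, (h i - h' i) * x i ≤ ∑ i, |h i - h' i| :=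
        inner_le_sum_abs _ (abs_coord_le_one hge hx)
      have : ∑ i, h i * x i = ∑ i, h' i * x i + ∑ i, (h i - h' i) * x i := by
        rw [← Finset.sum_add_distrib]; congr 1; ext i; ring
      linarith
    · have := supF_nonneg hhom hge h'
      have : (0:ℝ) ≤ ∑ i, |h i - h' i| := Finset.sum_nonneg fun i _ => abs_nonneg _
      linarith [supF_nonneg hhom hge h']
  refine LipschitzWith.of_dist_le_mul fun h h' => ?_
  rw [Real.dist_eq, abs_sub_le_iff]
  simp only [NNReal.coe_natCast]
  have hsum : ∀ h h' : Fin n → ℝ, ∑ i, |h i - h' i| ≤ n * dist h h' := by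
    intro h h'
    calc ∑ i, |h i - h' i| = ∑ i, dist (h i) (h' i) := by simp [Real.dist_eq]
      _ ≤ ∑ _i : Fin n, dist h h' := Finset.sum_le_sum fun i _ => dist_le_pi_dist h h' i
      _ = n * dist h h' := by simp [Finset.sum_const]
  constructor
  · linarith [key h h', hsum h h']
  · have h2 := hsum h' h
    rw [dist_comm h' h] at h2
    linarith [key h' h]
end supF

section main
variable {n : ℕ} {f : (Fin n → ℝ) → ℝ}

lemma integrable_supF (hhom : ∀ (c : ℝ) x, f (c • x) = |c| * f x)
    (hge : ∀ x, Real.sqrt (∑ i, x i ^ 2) ≤ f x) :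
    Integrable (supF f) (stdGaussianPi n) := by
  refine (integrable_sum_abs n).mono
    ((supF_lipschitz hhom hge).continuous.aestronglyMeasurable) (ae_of_all _ fun h => ?_)
  rw [Real.norm_eq_abs, Real.norm_eq_abs, abs_of_nonneg (supF_nonneg hhom hge h),
    abs_of_nonneg (Finset.sum_nonneg fun i _ => abs_nonneg _)]
  exact supF_le_sum_abs hge h

lemma measurePreserving_fst_std (n m : ℕ) :
    MeasurePreserving Prod.fst ((stdGaussianPi n).prod (stdGaussianPi m)) (stdGaussianPi n) :=
  ⟨measurable_fst, by rw [Measure.map_fst_prod]; simp⟩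

lemma measurePreserving_snd_std (n m : ℕ) :
    MeasurePreserving Prod.snd ((stdGaussianPi n).prod (stdGaussianPi m)) (stdGaussianPi m) :=
  ⟨measurable_snd, by rw [Measure.map_snd_prod]; simp⟩

lemma integrable_supF_fst (m : ℕ) (hhom : ∀ (c : ℝ) x, f (c • x) = |c| * f x)
    (hge : ∀ x, Real.sqrt (∑ i, x i ^ 2) ≤ f x) :
    Integrable (fun p : (Fin n → ℝ) × (Fin m → ℝ) => supF f p.1)
      ((stdGaussianPi n).prod (stdGaussianPi m)) :=
  ((measurePreserving_fst_std n m).integrable_comp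
    (supF_lipschitz hhom hge).continuous.aestronglyMeasurable).mpr (integrable_supF hhom hge)

lemma integrable_supF_snd {m : ℕ} {g : (Fin m → ℝ) → ℝ} (n : ℕ)
    (hhom : ∀ (c : ℝ) u, g (c • u) = |c| * g u)
    (hge : ∀ u, Real.sqrt (∑ j, u j ^ 2) ≤ g u) :
    Integrable (fun p : (Fin n → ℝ) × (Fin m → ℝ) => supF g p.2)
      ((stdGaussianPi n).prod (stdGaussianPi m)) :=
  ((measurePreserving_snd_std n m).integrable_comp
    (supF_lipschitz hhom hge).continuous.aestronglyMeasurable).mpr (integrable_supF hhom hge)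

lemma integral_supF_fst (m : ℕ) (hhom : ∀ (c : ℝ) x, f (c • x) = |c| * f x)
    (hge : ∀ x, Real.sqrt (∑ i, x i ^ 2) ≤ f x) :
    ∫ p, supF f p.1 ∂((stdGaussianPi n).prod (stdGaussianPi m))
      = ∫ h, supF f h ∂(stdGaussianPi n) := by
  rw [← (measurePreserving_fst_std n m).map_eq, integral_map measurable_fst.aemeasurable]
  rw [(measurePreserving_fst_std n m).map_eq]
  exact (supF_lipschitz hhom hge).continuous.aestronglyMeasurable

lemma integral_supF_snd {m : ℕ} {g : (Fin m → ℝ) → ℝ} (n : ℕ)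
    (hhom : ∀ (c : ℝ) u, g (c • u) = |c| * g u)
    (hge : ∀ u, Real.sqrt (∑ j, u j ^ 2) ≤ g u) :
    ∫ p, supF g p.2 ∂((stdGaussianPi n).prod (stdGaussianPi m))
      = ∫ h, supF g h ∂(stdGaussianPi m) := by
  rw [← (measurePreserving_snd_std n m).map_eq, integral_map measurable_snd.aemeasurable]
  rw [(measurePreserving_snd_std n m).map_eq]
  exact (supF_lipschitz hhom hge).continuous.aestronglyMeasurable

end main

/-- Let `f` be a norm on `ℝ^n` and `g` a norm on `ℝ^m`, with `f(x) ≥ ‖x‖₂` for all `x` and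
`g(v) ≥ ‖v‖₂` for all `v`, and let `λ₁, λ₂, α_x, α_v, C > 0`. Define the cone
`𝒞 = {(a,b) : λ₁ f(a) + λ₂ g(b) ≤ C λ₁ α_x ‖a‖₂ + C λ₂ α_v ‖b‖₂}` and
`𝒞* = 𝒞 ∩ S^{n+m−1}`. Then
`ω(𝒞*) ≤ C′·[(α_x + (λ₂/λ₁)α_v)·ω(B_f) + (α_v + (λ₁/λ₂)α_x)·ω(B_g)]`
for some constant `C′` depending only on `C`. -/

theorem stmt17 (C : ℝ) (hC : 0 < C) :
    ∃ C' : ℝ, 0 < C' ∧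
      ∀ (n m : ℕ) (f : (Fin n → ℝ) → ℝ) (g : (Fin m → ℝ) → ℝ) (lam₁ lam₂ αx αv : ℝ),
        0 < lam₁ → 0 < lam₂ → 0 < αx → 0 < αv →
        (∀ x y, f (x + y) ≤ f x + f y) → (∀ (c : ℝ) x, f (c • x) = |c| * f x) →
        (∀ x, f x = 0 → x = 0) →
        (∀ x, Real.sqrt (∑ i, x i ^ 2) ≤ f x) →
        (∀ u w, g (u + w) ≤ g u + g w) → (∀ (c : ℝ) u, g (c • u) = |c| * g u) →
        (∀ u, g u = 0 → u = 0) →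
        (∀ u, Real.sqrt (∑ j, u j ^ 2) ≤ g u) →
        gaussWidthProd {p : (Fin n → ℝ) × (Fin m → ℝ) |
            (lam₁ * f p.1 + lam₂ * g p.2 ≤
              C * lam₁ * αx * Real.sqrt (∑ i, p.1 i ^ 2) +
                C * lam₂ * αv * Real.sqrt (∑ j, p.2 j ^ 2)) ∧
            (∑ i, p.1 i ^ 2) + (∑ j, p.2 j ^ 2) = 1} ≤
          C' * ((αx + (lam₂ / lam₁) * αv) * gaussWidth {x | f x ≤ 1} +
            (αv + (lam₁ / lam₂) * αx) * gaussWidth {u | g u ≤ 1}) := by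
  refine ⟨C, hC, ?_⟩
  intro n m f g lam₁ lam₂ αx αv hl1 hl2 hax hav hfsub hfhom hf0 hfge hgsub hghom hg0 hgge
  set T : Set ((Fin n → ℝ) × (Fin m → ℝ)) := {p |
      (lam₁ * f p.1 + lam₂ * g p.2 ≤
        C * lam₁ * αx * Real.sqrt (∑ i, p.1 i ^ 2) +
          C * lam₂ * αv * Real.sqrt (∑ j, p.2 j ^ 2)) ∧
      (∑ i, p.1 i ^ 2) + (∑ j, p.2 j ^ 2) = 1} with hT
  set Ka : ℝ := C * (αx + lam₂ / lam₁ * αv) with hKa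
  set Kb : ℝ := C * (αv + lam₁ / lam₂ * αx) with hKb
  have hKa_pos : 0 < Ka := by rw [hKa]; positivity
  have hKb_pos : 0 < Kb := by rw [hKb]; positivity
  -- coordinate bounds for members of T
  have hsq : ∀ p ∈ T, (∑ i, p.1 i ^ 2) ≤ 1 ∧ (∑ j, p.2 j ^ 2) ≤ 1 := by
    intro p hp
    have h1 : (0:ℝ) ≤ ∑ i, p.1 i ^ 2 := Finset.sum_nonneg fun i _ => sq_nonneg _
    have h2 : (0:ℝ) ≤ ∑ j, p.2 j ^ 2 := Finset.sum_nonneg fun j _ => sq_nonneg _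
    have := hp.2
    constructor <;> linarith
  have habs1 : ∀ p ∈ T, ∀ i, |p.1 i| ≤ 1 := by
    intro p hp i
    refine (sq_le_one_iff_abs_le_one _).mp ?_
    exact le_trans (Finset.single_le_sum (fun j _ => sq_nonneg (p.1 j)) (Finset.mem_univ i))
      (hsq p hp).1
  have habs2 : ∀ p ∈ T, ∀ j, |p.2 j| ≤ 1 := by
    intro p hp j
    refine (sq_le_one_iff_abs_le_one _).mp ?_
    exact le_trans (Finset.single_le_sum (fun k _ => sq_nonneg (p.2 k)) (Finset.mem_univ j))
      (hsq p hp).2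
  -- norm bounds on T
  have hfKa : ∀ p ∈ T, f p.1 ≤ Ka := by
    intro p hp
    have hs1 : Real.sqrt (∑ i, p.1 i ^ 2) ≤ 1 := by
      rw [show (1:ℝ) = Real.sqrt 1 by simp]
      exact Real.sqrt_le_sqrt (hsq p hp).1
    have hs2 : Real.sqrt (∑ j, p.2 j ^ 2) ≤ 1 := by
      rw [show (1:ℝ) = Real.sqrt 1 by simp]
      exact Real.sqrt_le_sqrt (hsq p hp).2
    have hgb0 : 0 ≤ g p.2 := le_trans (Real.sqrt_nonneg _) (hgge _)
    have e1 : C * lam₁ * αx * Real.sqrt (∑ i, p.1 i ^ 2) ≤ C * lam₁ * αx :=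
      (mul_le_of_le_one_right (by positivity) hs1)
    have e2 : C * lam₂ * αv * Real.sqrt (∑ j, p.2 j ^ 2) ≤ C * lam₂ * αv :=
      (mul_le_of_le_one_right (by positivity) hs2)
    have hKa' : lam₁ * Ka = C * lam₁ * αx + C * lam₂ * αv := by
      rw [hKa]; field_simp
    have hmul : lam₁ * f p.1 ≤ lam₁ * Ka := by
      rw [hKa']
      have := hp.1
      nlinarith [mul_nonneg hl2.le hgb0]
    exact le_of_mul_le_mul_left hmul hl1
  have hgKb : ∀ p ∈ T, g p.2 ≤ Kb := by
    intro p hp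
    have hs1 : Real.sqrt (∑ i, p.1 i ^ 2) ≤ 1 := by
      rw [show (1:ℝ) = Real.sqrt 1 by simp]
      exact Real.sqrt_le_sqrt (hsq p hp).1
    have hs2 : Real.sqrt (∑ j, p.2 j ^ 2) ≤ 1 := by
      rw [show (1:ℝ) = Real.sqrt 1 by simp]
      exact Real.sqrt_le_sqrt (hsq p hp).2
    have hfa0 : 0 ≤ f p.1 := le_trans (Real.sqrt_nonneg _) (hfge _)
    have e1 : C * lam₁ * αx * Real.sqrt (∑ i, p.1 i ^ 2) ≤ C * lam₁ * αx :=
      (mul_le_of_le_one_right (by positivity) hs1)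
    have e2 : C * lam₂ * αv * Real.sqrt (∑ j, p.2 j ^ 2) ≤ C * lam₂ * αv :=
      (mul_le_of_le_one_right (by positivity) hs2)
    have hKb' : lam₂ * Kb = C * lam₂ * αv + C * lam₁ * αx := by
      rw [hKb]; field_simp
    have hmul : lam₂ * g p.2 ≤ lam₂ * Kb := by
      rw [hKb']
      have := hp.1
      nlinarith [mul_nonneg hl1.le hfa0]
    exact le_of_mul_le_mul_left hmul hl2
  -- pointwise sup bound
  have hS_le : ∀ h : (Fin n → ℝ) × (Fin m → ℝ),
      sSup ((fun p : (Fin n → ℝ) × (Fin m → ℝ) =>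
          (∑ i, h.1 i * p.1 i) + ∑ j, h.2 j * p.2 j) '' T)
        ≤ Ka * supF f h.1 + Kb * supF g h.2 := by
    intro h
    refine Real.sSup_le ?_ ?_
    · rintro v ⟨p, hp, rfl⟩
      dsimp only
      have t1 : ∑ i, h.1 i * p.1 i ≤ f p.1 * supF f h.1 :=
        inner_le_f_mul_supF hfhom hf0 hfge h.1 p.1
      have t2 : ∑ j, h.2 j * p.2 j ≤ g p.2 * supF g h.2 :=
        inner_le_f_mul_supF hghom hg0 hgge h.2 p.2
      have t3 : f p.1 * supF f h.1 ≤ Ka * supF f h.1 :=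
        mul_le_mul_of_nonneg_right (hfKa p hp) (supF_nonneg hfhom hfge h.1)
      have t4 : g p.2 * supF g h.2 ≤ Kb * supF g h.2 :=
        mul_le_mul_of_nonneg_right (hgKb p hp) (supF_nonneg hghom hgge h.2)
      linarith
    · exact add_nonneg (mul_nonneg hKa_pos.le (supF_nonneg hfhom hfge h.1))
        (mul_nonneg hKb_pos.le (supF_nonneg hghom hgge h.2))
  -- pointwise nonnegativity of the sup
  have hS_nonneg : ∀ h : (Fin n → ℝ) × (Fin m → ℝ),
      0 ≤ sSup ((fun p : (Fin n → ℝ) × (Fin m → ℝ) =>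
          (∑ i, h.1 i * p.1 i) + ∑ j, h.2 j * p.2 j) '' T) := by
    intro h
    rcases T.eq_empty_or_nonempty with hTe | ⟨p, hp⟩
    · rw [hTe]; simp
    · have hbddA : BddAbove ((fun p : (Fin n → ℝ) × (Fin m → ℝ) =>
          (∑ i, h.1 i * p.1 i) + ∑ j, h.2 j * p.2 j) '' T) := by
        refine ⟨(∑ i, |h.1 i|) + ∑ j, |h.2 j|, ?_⟩
        rintro v ⟨q, hq, rfl⟩
        exact add_le_add (inner_le_sum_abs h.1 (habs1 q hq)) (inner_le_sum_abs h.2 (habs2 q hq))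
      have hneg : ((-p.1, -p.2) : (Fin n → ℝ) × (Fin m → ℝ)) ∈ T := by
        have ef : f (-p.1) = f p.1 := by
          have := hfhom (-1) p.1; simpa using this
        have eg : g (-p.2) = g p.2 := by
          have := hghom (-1) p.2; simpa using this
        refine ⟨?_, ?_⟩
        · simpa [ef, eg, neg_sq] using hp.1
        · simpa [neg_sq] using hp.2
      have v1 := le_csSup hbddA ⟨p, hp, rfl⟩
      have v2 := le_csSup hbddA ⟨(-p.1, -p.2), hneg, rfl⟩
      dsimp only at v1 v2
      have ev : (∑ i, h.1 i * (-p.1) i) + ∑ j, h.2 j * (-p.2) j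
          = -((∑ i, h.1 i * p.1 i) + ∑ j, h.2 j * p.2 j) := by
        simp only [Pi.neg_apply, mul_neg, Finset.sum_neg_distrib]
        ring
      rw [ev] at v2
      linarith
  -- integrability of the dominating function
  have hint : Integrable (fun h : (Fin n → ℝ) × (Fin m → ℝ) =>
      Ka * supF f h.1 + Kb * supF g h.2) ((stdGaussianPi n).prod (stdGaussianPi m)) :=
    ((integrable_supF_fst m hfhom hfge).const_mul Ka).add
      ((integrable_supF_snd n hghom hgge).const_mul Kb)
  have key : gaussWidthProd T ≤ Ka * gaussWidth {x | f x ≤ 1} + Kb * gaussWidth {u | g u ≤ 1} := by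
    have step1 : gaussWidthProd T ≤ ∫ h, (Ka * supF f h.1 + Kb * supF g h.2)
        ∂((stdGaussianPi n).prod (stdGaussianPi m)) :=
      integral_mono_of_nonneg (ae_of_all _ hS_nonneg) hint (ae_of_all _ hS_le)
    have step2 : ∫ h, (Ka * supF f h.1 + Kb * supF g h.2)
        ∂((stdGaussianPi n).prod (stdGaussianPi m))
        = Ka * gaussWidth {x | f x ≤ 1} + Kb * gaussWidth {u | g u ≤ 1} := by
      rw [integral_add ((integrable_supF_fst m hfhom hfge).const_mul Ka)
        ((integrable_supF_snd n hghom hgge).const_mul Kb),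
        integral_const_mul, integral_const_mul,
        integral_supF_fst m hfhom hfge, integral_supF_snd n hghom hgge]
      rfl
    linarith [step1, step2.le, step2.ge]
  calc gaussWidthProd T ≤ Ka * gaussWidth {x | f x ≤ 1} + Kb * gaussWidth {u | g u ≤ 1} := key
    _ = C * ((αx + lam₂ / lam₁ * αv) * gaussWidth {x | f x ≤ 1} +
        (αv + lam₁ / lam₂ * αx) * gaussWidth {u | g u ≤ 1}) := by
      rw [hKa, hKb]; ring
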